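/- Let Y, Z1, Z2, Z3 ∈ ℝ² and suppose ⟨Y Z1⟩ ≠ 0, ⟨Y Z2⟩ ≠ 0 and ⟨Y Z3⟩ ≠ 0. Then ⟨Z2 Z3⟩² / (⟨Y Z3⟩ · ⟨Y Z2⟩²) − ⟨Z3 Z1⟩² / (⟨Y Z3⟩ · ⟨Y Z1⟩²) = ⟨Z2 Z1⟩ · (⟨Z2 Z3⟩ · ⟨Y Z1⟩ − ⟨Z3 Z1⟩ · ⟨Y Z2⟩) / (⟨Y Z1⟩² · ⟨Y Z2⟩²). -/

import Mathlib

/-- The 2×2 determinant of the matrix with rows `a` and `b`. -/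
def det2 (a b : Fin 2 → ℝ) : ℝ := a 0 * b 1 - a 1 * b 0

theorem stmt_1 (Y Z1 Z2 Z3 : Fin 2 → ℝ)
    (h1 : det2 Y Z1 ≠ 0) (h2 : det2 Y Z2 ≠ 0) (h3 : det2 Y Z3 ≠ 0) :
    det2 Z2 Z3 ^ 2 / (det2 Y Z3 * det2 Y Z2 ^ 2) -
      det2 Z3 Z1 ^ 2 / (det2 Y Z3 * det2 Y Z1 ^ 2) =
    det2 Z2 Z1 * (det2 Z2 Z3 * det2 Y Z1 - det2 Z3 Z1 * det2 Y Z2) /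
      (det2 Y Z1 ^ 2 * det2 Y Z2 ^ 2) := by
  unfold det2 at *
  rw [div_sub_div _ _ (mul_ne_zero h3 (pow_ne_zero 2 h2)) (mul_ne_zero h3 (pow_ne_zero 2 h1)),
    div_eq_div_iff (mul_ne_zero (mul_ne_zero h3 (pow_ne_zero 2 h2)) (mul_ne_zero h3 (pow_ne_zero 2 h1)))
      (mul_ne_zero (pow_ne_zero 2 h1) (pow_ne_zero 2 h2))]
  ring
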